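/- Let A be a bounded positive operator with trivial kernel on a complex Hilbert space H, and let Z be a closed linear subspace of H with Z ∩ range(A) = {0}. Let D be the (unique) bounded positive square root of the operator A(I − P_Z)A, where P_Z is the orthogonal projection onto Z. Then D has trivial kernel (equivalently, dense range). -/

import Mathlib

open ContinuousLinearMap

/-- Let `A` be bounded positive injective, `Z` a closed subspace with `Z ∩ range A = {0}`,
and `D` the positive square root of `A(I − P_Z)A`. Then `D` is injective. -/
theorem stmt3 {H : Type*} [NormedAddCommGroup H] [InnerProductSpace ℂ H] [CompleteSpace H]
    (A : H →L[ℂ] H) (hA : A.IsPositive) (hAinj : Function.Injective A)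
    (Z : Submodule ℂ H) [CompleteSpace Z] (hZA : Z ⊓ LinearMap.range (A : H →ₗ[ℂ] H) = ⊥)
    (D : H →L[ℂ] H) (hD : D.IsPositive)
    (hD2 : D ∘L D = A ∘L ((1 : H →L[ℂ] H) - Z.subtypeL ∘L Z.orthogonalProjectionOnto) ∘L A) :
    Function.Injective D := by
  suffices hker : ∀ x, D x = 0 → x = 0 by
    intro a b hab
    have : D (a - b) = 0 := by rw [map_sub, hab, sub_self]
    exact sub_eq_zero.mp (hker _ this)
  intro x hx
  set u := A x with hu
  have key : A ((1 - Z.subtypeL ∘L Z.orthogonalProjectionOnto) u) = 0 := by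
    have := congrFun (congrArg DFunLike.coe hD2) x
    simp only [ContinuousLinearMap.comp_apply, hx, map_zero] at this
    exact this.symm
  have hsa : ContinuousLinearMap.adjoint A = A := hA.1.clm_adjoint_eq
  have hinner : (inner ℂ u ((1 - Z.subtypeL ∘L Z.orthogonalProjectionOnto) u) : ℂ) = 0 := by
    calc (inner ℂ u ((1 - Z.subtypeL ∘L Z.orthogonalProjectionOnto) u) : ℂ)
        = inner ℂ ((ContinuousLinearMap.adjoint A) x)
            ((1 - Z.subtypeL ∘L Z.orthogonalProjectionOnto) u) := by rw [hsa, hu]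
      _ = inner ℂ x (A ((1 - Z.subtypeL ∘L Z.orthogonalProjectionOnto) u)) := by
          rw [ContinuousLinearMap.adjoint_inner_left]
      _ = 0 := by rw [key, inner_zero_right]
  set w := u - (Z.subtypeL ∘L Z.orthogonalProjectionOnto) u with hw
  have hwval : (1 - Z.subtypeL ∘L Z.orthogonalProjectionOnto) u = w := by
    simp [hw, ContinuousLinearMap.sub_apply]
  rw [hwval] at hinner
  have hwperp : w ∈ Zᗮ := by
    exact Submodule.sub_starProjection_mem_orthogonal (K := Z) u
  have hPu : (Z.subtypeL ∘L Z.orthogonalProjectionOnto) u ∈ Z := by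
    simp [Submodule.coe_mem]
  have hzero : (inner ℂ w w : ℂ) = 0 := by
    have hsplit : u = (Z.subtypeL ∘L Z.orthogonalProjectionOnto) u + w := by
      simp [hw]
    have h1 : (inner ℂ ((Z.subtypeL ∘L Z.orthogonalProjectionOnto) u) w : ℂ) = 0 :=
      hwperp _ hPu
    calc (inner ℂ w w : ℂ)
        = inner ℂ ((Z.subtypeL ∘L Z.orthogonalProjectionOnto) u + w) w - inner ℂ ((Z.subtypeL ∘L Z.orthogonalProjectionOnto) u) w := by
          rw [inner_add_left]; ring
      _ = 0 := by rw [← hsplit, h1, sub_zero]; exact hinner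
  have hw0 : w = 0 := inner_self_eq_zero.mp hzero
  have huZ : u ∈ Z := by
    have heq : u = (Z.subtypeL ∘L Z.orthogonalProjectionOnto) u := by
      have := hw0; rw [hw] at this; exact sub_eq_zero.mp this
    rw [heq]; exact hPu
  have huA : u ∈ LinearMap.range (A : H →ₗ[ℂ] H) := ⟨x, rfl⟩
  have : u ∈ Z ⊓ LinearMap.range (A : H →ₗ[ℂ] H) := ⟨huZ, huA⟩
  rw [hZA] at this
  have : A x = 0 := this
  exact hAinj (by simpa using this)
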